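/- Let S = Λ + M be a periodic point set in ℝ^n with unit cell U on a basis v_1, …, v_n, and for an integer k ≥ 2 let U_k be the cell on the basis k·v_1, …, k·v_n and M_k = S ∩ U_k the extended motif. Then β(S) ≤ β(M_k). -/

import Mathlib

noncomputable section

/-- `δ` bridges `S`: any two points of `S` are joined by a finite sequence of points of `S`
with consecutive distances at most `δ`. -/
def Bridges {n : ℕ} (δ : ℝ) (S : Set (EuclideanSpace ℝ (Fin n))) : Prop :=
  ∀ p ∈ S, ∀ q ∈ S, ∃ k : ℕ, ∃ f : Fin (k + 1) → EuclideanSpace ℝ (Fin n),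
    f 0 = p ∧ f (Fin.last k) = q ∧ (∀ i, f i ∈ S) ∧
    ∀ i : Fin k, dist (f i.castSucc) (f i.succ) ≤ δ

/-- The bridge length β(S): the infimum of all δ ≥ 0 that bridge S. -/
def bridgeLength {n : ℕ} (S : Set (EuclideanSpace ℝ (Fin n))) : ℝ :=
  sInf {δ : ℝ | 0 ≤ δ ∧ Bridges δ S}

/-- The lattice Λ generated by the basis `b`: the ℤ-span of the basis vectors. -/
def lat {n : ℕ} (b : Module.Basis (Fin n) ℝ (EuclideanSpace ℝ (Fin n))) :
    Submodule ℤ (EuclideanSpace ℝ (Fin n)) :=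
  Submodule.span ℤ (Set.range (b : Fin n → EuclideanSpace ℝ (Fin n)))

/-- The cell U_k of the basis `b` scaled by `k`: points ∑ t_i (k v_i) with 0 ≤ t_i < 1,
i.e. points whose coordinates in the basis lie in [0, k). -/
def cellK {n : ℕ} (b : Module.Basis (Fin n) ℝ (EuclideanSpace ℝ (Fin n))) (k : ℕ) :
    Set (EuclideanSpace ℝ (Fin n)) :=
  {x | ∀ i, 0 ≤ b.repr x i ∧ b.repr x i < (k : ℝ)}

/-- The unit cell U of the basis `b`. -/
def unitCell {n : ℕ} (b : Module.Basis (Fin n) ℝ (EuclideanSpace ℝ (Fin n))) :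
    Set (EuclideanSpace ℝ (Fin n)) :=
  cellK b 1

/-- The periodic point set S = Λ + M. -/
def periodicSet {n : ℕ} (b : Module.Basis (Fin n) ℝ (EuclideanSpace ℝ (Fin n)))
    (M : Set (EuclideanSpace ℝ (Fin n))) : Set (EuclideanSpace ℝ (Fin n)) :=
  {x | ∃ l ∈ (lat b : Set (EuclideanSpace ℝ (Fin n))), ∃ p ∈ M, x = l + p}

open Relation

variable {n : ℕ}

abbrev E (n : ℕ) := EuclideanSpace ℝ (Fin n)

def Step (δ : ℝ) (S : Set (E n)) (x y : E n) : Prop :=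
  x ∈ S ∧ y ∈ S ∧ dist x y ≤ δ

lemma step_symm {δ : ℝ} {S : Set (E n)} : Symmetric (Step δ S) := by
  rintro x y ⟨hx, hy, hd⟩; exact ⟨hy, hx, by rwa [dist_comm]⟩

lemma bridges_of_chain {δ : ℝ} {S : Set (E n)}
    (h : ∀ p ∈ S, ∀ q ∈ S, ReflTransGen (Step δ S) p q) : Bridges δ S := by
  intro p hp q hq
  have hc := h p hp q hq
  clear h hq
  induction hc with
  | refl =>
    exact ⟨0, fun _ => p, rfl, rfl, fun _ => hp, fun i => i.elim0⟩
  | @tail b c hab hbc ih =>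
    obtain ⟨k, f, h0, hl, hmem, hd⟩ := ih
    refine ⟨k + 1, Fin.snoc f c, ?_, ?_, ?_, ?_⟩
    · rw [show (0 : Fin (k+2)) = Fin.castSucc 0 by rfl, Fin.snoc_castSucc]; exact h0
    · simp [Fin.snoc_last]
    · intro i
      induction i using Fin.lastCases with
      | last => simpa [Fin.snoc_last] using hbc.2.1
      | cast j => rw [Fin.snoc_castSucc]; exact hmem j
    · intro i
      induction i using Fin.lastCases with
      | last =>
        rw [Fin.succ_last, Fin.snoc_last, Fin.snoc_castSucc, hl]
        exact hbc.2.2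
      | cast j =>
        rw [Fin.succ_castSucc, Fin.snoc_castSucc, Fin.snoc_castSucc]
        exact hd j

lemma chain_of_bridges {δ : ℝ} {S : Set (E n)} (h : Bridges δ S) :
    ∀ p ∈ S, ∀ q ∈ S, ReflTransGen (Step δ S) p q := by
  intro p hp q hq
  obtain ⟨k, f, h0, hl, hmem, hd⟩ := h p hp q hq
  have key : ∀ j : Fin (k + 1), ReflTransGen (Step δ S) (f 0) (f j) := by
    intro j
    induction j using Fin.induction with
    | zero => exact ReflTransGen.refl
    | succ i ih => exact ih.tail ⟨hmem _, hmem _, hd i⟩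
  rw [← h0, ← hl]; exact key _

variable {b : Module.Basis (Fin n) ℝ (E n)} {M : Set (E n)} {k : ℕ}

lemma translate_mem {l x : E n} (hl : l ∈ lat b) (hx : x ∈ periodicSet b M) :
    l + x ∈ periodicSet b M := by
  obtain ⟨l', hl', p, hp, rfl⟩ := hx
  exact ⟨l + l', Submodule.add_mem _ hl hl', p, hp, (add_assoc _ _ _).symm⟩

lemma motif_mem (m : E n) (hm : m ∈ M) : m ∈ periodicSet b M :=
  ⟨0, Submodule.zero_mem _, m, hm, (zero_add m).symm⟩

lemma unitCell_subset_cellK (hk : 1 ≤ k) : unitCell b ⊆ cellK b k := by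
  intro x hx i
  refine ⟨(hx i).1, lt_of_lt_of_le (hx i).2 ?_⟩
  exact_mod_cast hk

lemma basis_mem_lat (i : Fin n) : (b i : E n) ∈ lat b :=
  Submodule.subset_span ⟨i, rfl⟩

lemma basis_add_mem_cellK {m : E n} (i : Fin n) (hm : m ∈ unitCell b) (hk : 2 ≤ k) :
    b i + m ∈ cellK b k := by
  intro j
  have hr : b.repr (b i + m) j = (if i = j then (1:ℝ) else 0) + b.repr m j := by
    rw [map_add, Finsupp.add_apply, Module.Basis.repr_self, Finsupp.single_apply]
  have hmj := hm j
  rw [Nat.cast_one] at hmj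
  have hk2 : (2:ℝ) ≤ (k:ℝ) := by exact_mod_cast hk
  rw [hr]
  constructor
  · have : (0:ℝ) ≤ (if i = j then (1:ℝ) else 0) := by positivity
    linarith [hmj.1]
  · have : (if i = j then (1:ℝ) else 0) ≤ 1 := by split <;> norm_num
    linarith [hmj.2]

lemma step_translate {δ : ℝ} {l x y : E n} (hl : l ∈ lat b)
    (h : Step δ (periodicSet b M) x y) :
    Step δ (periodicSet b M) (l + x) (l + y) :=
  ⟨translate_mem hl h.1, translate_mem hl h.2.1, by rw [dist_add_left]; exact h.2.2⟩

lemma chain_translate {δ : ℝ} {l x y : E n} (hl : l ∈ lat b)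
    (h : ReflTransGen (Step δ (periodicSet b M)) x y) :
    ReflTransGen (Step δ (periodicSet b M)) (l + x) (l + y) :=
  ReflTransGen.lift (fun z => l + z) (fun _ _ hs => step_translate hl hs) _ _ h

lemma step_restrict {δ : ℝ} {x y : E n} {C : Set (E n)}
    (h : Step δ (periodicSet b M ∩ C) x y) : Step δ (periodicSet b M) x y :=
  ⟨h.1.1, h.2.1.1, h.2.2⟩

/-- Main chain lemma: reachability in S from reachability in the extended motif. -/
lemma chain_in_S {δ : ℝ} (hMU : M ⊆ unitCell b) (hk : 2 ≤ k)
    (hB : ∀ p ∈ periodicSet b M ∩ cellK b k, ∀ q ∈ periodicSet b M ∩ cellK b k,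
      ReflTransGen (Step δ (periodicSet b M ∩ cellK b k)) p q)
    {l : E n} (hl : l ∈ lat b) :
    ∀ m ∈ M, ∀ m' ∈ M, ReflTransGen (Step δ (periodicSet b M)) m (l + m') := by
  set S := periodicSet b M with hS
  set C := cellK b k with hC
  have hmSC : ∀ m ∈ M, m ∈ S ∩ C := fun m hm =>
    ⟨motif_mem m hm, unitCell_subset_cellK (le_trans one_le_two hk) (hMU hm)⟩
  have hbm : ∀ (i : Fin n), ∀ m ∈ M, b i + m ∈ S ∩ C := fun i m hm =>
    ⟨translate_mem (basis_mem_lat i) (motif_mem m hm), basis_add_mem_cellK i (hMU hm) hk⟩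
  -- helper closure properties
  have Pzero : ∀ m ∈ M, ∀ m' ∈ M, ReflTransGen (Step δ S) m ((0:E n) + m') := by
    intro m hm m' hm'
    rw [zero_add]
    exact ReflTransGen.mono (fun _ _ h => step_restrict h) _ _ (hB m (hmSC m hm) m' (hmSC m' hm'))
  have Padd : ∀ u v : E n, u ∈ lat b → v ∈ lat b →
      (∀ m ∈ M, ∀ m' ∈ M, ReflTransGen (Step δ S) m (u + m')) →
      (∀ m ∈ M, ∀ m' ∈ M, ReflTransGen (Step δ S) m (v + m')) →
      (∀ m ∈ M, ∀ m' ∈ M, ReflTransGen (Step δ S) m (u + v + m')) := by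
    intro u v hu hv Pu Pv m hm m' hm'
    have h1 := Pv m hm m hm
    have h2 := chain_translate hv (Pu m hm m' hm')
    have h3 : v + (u + m') = u + v + m' := by rw [← add_assoc, add_comm v u]
    rw [h3] at h2
    exact h1.trans h2
  have Pneg : ∀ u : E n, u ∈ lat b →
      (∀ m ∈ M, ∀ m' ∈ M, ReflTransGen (Step δ S) m (u + m')) →
      (∀ m ∈ M, ∀ m' ∈ M, ReflTransGen (Step δ S) m (-u + m')) := by
    intro u hu Pu m hm m' hm'
    have h1 := Pu m' hm' m hm
    have h2 : ReflTransGen (Step δ S) (u + m) m' := by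
      haveI : Std.Symm (Step δ S) := ⟨fun _ _ h => step_symm h⟩; exact Std.Symm.symm _ _ h1
    have h3 := chain_translate (Submodule.neg_mem _ hu) h2
    rwa [neg_add_cancel_left] at h3
  -- span induction
  induction hl using Submodule.span_induction with
  | mem x hx =>
    obtain ⟨i, rfl⟩ := hx
    intro m hm m' hm'
    exact ReflTransGen.mono (fun _ _ h => step_restrict h) _ _ (hB m (hmSC m hm) _ (hbm i m' hm'))
  | zero => exact Pzero
  | add u v hu hv Pu Pv => exact Padd u v hu hv Pu Pv
  | smul z x hx Px =>
    induction z using Int.induction_on with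
    | zero => rw [zero_smul]; exact Pzero
    | succ i ih =>
      have he : ((i:ℤ) + 1) • x = (i:ℤ) • x + x := by rw [add_smul, one_smul]
      rw [he]
      exact Padd _ _ (Submodule.smul_mem _ _ hx) hx ih Px
    | pred i ih =>
      have he : (-(i:ℤ) - 1) • x = (-(i:ℤ)) • x + (-x) := by
        rw [sub_smul, one_smul, sub_eq_add_neg]
      rw [he]
      exact Padd _ _ (Submodule.smul_mem _ _ hx) (Submodule.neg_mem _ hx)
        ih (Pneg x hx Px)

lemma cellK_bounded (b : Module.Basis (Fin n) ℝ (E n)) (k : ℕ) :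
    Bornology.IsBounded (cellK b k) := by
  rw [isBounded_iff_forall_norm_le]
  refine ⟨∑ i, (k:ℝ) * ‖b i‖, fun x hx => ?_⟩
  calc ‖x‖ = ‖∑ i, b.repr x i • b i‖ := by rw [Module.Basis.sum_repr]
    _ ≤ ∑ i, ‖b.repr x i • b i‖ := norm_sum_le _ _
    _ ≤ ∑ i, (k:ℝ) * ‖b i‖ := by
        apply Finset.sum_le_sum
        intro i _
        rw [norm_smul, Real.norm_eq_abs, abs_of_nonneg (hx i).1]
        exact mul_le_mul_of_nonneg_right (le_of_lt (hx i).2) (norm_nonneg _)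

/-- For a periodic point set S = Λ + M with unit cell U on basis v_1,…,v_n
and the extended motif M_k = S ∩ U_k (k ≥ 2), the bridge length satisfies β(S) ≤ β(M_k). -/
theorem bridgeLength_le_extended_motif {n : ℕ}
    (b : Module.Basis (Fin n) ℝ (EuclideanSpace ℝ (Fin n)))
    (M : Set (EuclideanSpace ℝ (Fin n))) (hMfin : M.Finite) (hMne : M.Nonempty)
    (hMU : M ⊆ unitCell b) (k : ℕ) (hk : 2 ≤ k) :
    bridgeLength (periodicSet b M) ≤ bridgeLength (periodicSet b M ∩ cellK b k) := by
  set S := periodicSet b M with hS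
  set C := cellK b k with hC
  apply csInf_le_csInf
  · exact ⟨0, fun δ hδ => hδ.1⟩
  · -- nonempty: the diameter bridges S ∩ C
    refine ⟨Metric.diam (S ∩ C), Metric.diam_nonneg, ?_⟩
    intro p hp q hq
    refine ⟨1, fun i => if i = 0 then p else q, by simp, by simp [Fin.last], ?_, ?_⟩
    · intro i
      by_cases h : i = 0 <;> simp [h, hp, hq]
    · intro i
      have hi : i = 0 := Subsingleton.elim i 0
      subst hi
      have h0 : (Fin.castSucc 0 : Fin 2) = 0 := rfl
      have h1 : ((0 : Fin 1).succ : Fin 2) ≠ 0 := by decide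
      simp only [h0, if_pos rfl, if_neg h1]
      exact Metric.dist_le_diam_of_mem
        (Bornology.IsBounded.subset (cellK_bounded b k) (Set.inter_subset_right)) hp hq
  · -- subset: anything bridging S ∩ C bridges S
    rintro δ ⟨hδ0, hδB⟩
    refine ⟨hδ0, bridges_of_chain ?_⟩
    intro p hp q hq
    obtain ⟨lp, hlp, mp, hmp, rfl⟩ := hp
    obtain ⟨lq, hlq, mq, hmq, rfl⟩ := hq
    have hchain := chain_of_bridges hδB
    have h1 := chain_in_S hMU hk hchain hlp mp hmp mp hmp
    have h2 := chain_in_S hMU hk hchain hlq mp hmp mq hmq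
    exact (show ReflTransGen (Step δ S) _ _ by
      haveI : Std.Symm (Step δ S) := ⟨fun _ _ h => step_symm h⟩; exact Std.Symm.symm _ _ h1).trans h2
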